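/- In a folded representation with l an integral domain contained in ℝ and τ > 0: for every γ ∈ Φ written as γ = Σ_{α∈Δ} m_α·α with integers m_α that are all ≥ 0 (respectively all ≤ 0), one has π_τ(γ) = Σ_{α∈Δ_rat} (m_α + τ·m_{𝒯α})·π_τ(α) + Σ_{α∈Δ^𝒯} m_α·α, and all the coefficients m_α + τ·m_{𝒯α} (α ∈ Δ_rat) and m_α (α ∈ Δ^𝒯) are ≥ 0 (respectively ≤ 0) as real numbers. Consequently every element of π_τ(Φ) is an l-linear combination of Δ_τ := π_τ(Δ_rat ⊔ Δ^𝒯) whose coefficients are all nonnegative or all nonpositive real numbers, i.e. Δ_τ is a set of simple roots for the twisted folding Φ_τ. -/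

import Mathlib

open scoped BigOperators

section Common

variable {k : Type*} [CommRing k] {l : Type*} [CommRing l] [Algebra k l]

/-- the standard `l`-bilinear dot product on `𝒰 = lⁿ`. -/
def dotU {n : ℕ} (u v : Fin n → l) : l := ∑ i, u i * v i

/-- the coordinate embedding `U → U_l = (l²)ⁿ`. -/
noncomputable def emb (b : Module.Basis (Fin 2) k l) {n : ℕ} (u : Fin n → l) : Fin n → l × l :=
  fun i => (algebraMap k l (b.repr (u i) 0), algebraMap k l (b.repr (u i) 1))

end Common

section Ul
variable {l : Type*} [CommRing l]

/-- the `τ`-operator `𝒯_l` on `U_l = (l²)ⁿ` in coordinates. -/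
def tauOp (c₁ c₂ : l) (n : ℕ) : (Fin n → l × l) →ₗ[l] (Fin n → l × l) where
  toFun v := fun i => (-c₂ * (v i).2, (v i).1 + c₁ * (v i).2)
  map_add' x y := by
    funext i
    refine Prod.ext ?_ ?_ <;> simp <;> ring
  map_smul' c x := by
    funext i
    refine Prod.ext ?_ ?_ <;> simp <;> ring

/-- the projection `π_τ = (1/(τ−σ))(𝒯_l − σ·id)` onto the `τ`-eigenspace. -/
def piTau (c₁ c₂ σ invτσ : l) {n : ℕ} (v : Fin n → l × l) : Fin n → l × l :=
  invτσ • (tauOp c₁ c₂ n v - σ • v)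

end Ul

section Aux

variable {k : Type*} [CommRing k] {l : Type*} [CommRing l] [Algebra k l]

/-- `emb` as an additive monoid hom. -/
noncomputable def embHom (b : Module.Basis (Fin 2) k l) (n : ℕ) : (Fin n → l) →+ (Fin n → l × l) where
  toFun := emb b
  map_zero' := by funext i; simp [emb, Prod.ext_iff]
  map_add' u v := by funext i; simp [emb, Prod.ext_iff]

lemma repr_tau_mul {c₁ c₂ : k} {τ : l} (b : Module.Basis (Fin 2) k l) (hb0 : b 0 = 1)
    (hb1 : b 1 = τ) (hτ : τ ^ 2 = algebraMap k l c₁ * τ - algebraMap k l c₂) (x : l) :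
    b.repr (τ * x) 0 = -c₂ * b.repr x 1 ∧
      b.repr (τ * x) 1 = b.repr x 0 + c₁ * b.repr x 1 := by
  have hx : x = b.repr x 0 • b 0 + b.repr x 1 • b 1 := by
    have h := b.sum_repr x
    rw [Fin.sum_univ_two] at h
    exact h.symm
  have key : τ * x = (-c₂ * b.repr x 1) • b 0 + (b.repr x 0 + c₁ * b.repr x 1) • b 1 := by
    conv_lhs => rw [hx]
    rw [hb0, hb1]
    simp only [Algebra.smul_def, map_add, map_mul, map_neg, mul_one]
    linear_combination (algebraMap k l (b.repr x 1)) * hτ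
  rw [key]
  simp [map_add, Module.Basis.repr_self, Finsupp.smul_single]

/-- `emb` intertwines multiplication by `τ` with `tauOp`. -/
lemma emb_tau {c₁ c₂ : k} {τ : l} (b : Module.Basis (Fin 2) k l) (hb0 : b 0 = 1)
    (hb1 : b 1 = τ) (hτ : τ ^ 2 = algebraMap k l c₁ * τ - algebraMap k l c₂)
    {n : ℕ} (u : Fin n → l) :
    emb b (τ • u) = tauOp (algebraMap k l c₁) (algebraMap k l c₂) n (emb b u) := by
  funext i
  obtain ⟨h0, h1⟩ := repr_tau_mul b hb0 hb1 hτ (u i)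
  simp only [emb, tauOp, LinearMap.coe_mk, AddHom.coe_mk, Pi.smul_apply, smul_eq_mul]
  exact Prod.ext (by rw [h0]; simp [map_mul]) (by rw [h1]; simp [map_add, map_mul])

end Aux

section Aux2
variable {l : Type*} [CommRing l]

lemma piTau_smul (c₁ c₂ σ invτσ : l) {n : ℕ} (c : l) (v : Fin n → l × l) :
    piTau c₁ c₂ σ invτσ (c • v) = c • piTau c₁ c₂ σ invτσ v := by
  funext i
  simp only [piTau, tauOp, LinearMap.coe_mk, AddHom.coe_mk, Pi.smul_apply, Pi.sub_apply]
  obtain ⟨x, y⟩ := v i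
  simp only [Prod.smul_mk, smul_eq_mul, Prod.mk_sub_mk]
  exact Prod.ext (by ring) (by ring)

lemma piTau_add (c₁ c₂ σ invτσ : l) {n : ℕ} (v w : Fin n → l × l) :
    piTau c₁ c₂ σ invτσ (v + w) = piTau c₁ c₂ σ invτσ v + piTau c₁ c₂ σ invτσ w := by
  funext i
  simp only [piTau, tauOp, LinearMap.coe_mk, AddHom.coe_mk, Pi.smul_apply, Pi.sub_apply,
    Pi.add_apply]
  obtain ⟨x, y⟩ := v i
  obtain ⟨x', y'⟩ := w i
  simp only [Prod.smul_mk, smul_eq_mul, Prod.mk_sub_mk, Prod.mk_add_mk]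
  exact Prod.ext (by ring) (by ring)

/-- `piTau ∘ tauOp = τ • piTau` when `c₁ = τ + σ`, `c₂ = τσ`. -/
lemma piTau_tauOp {τ σ invτσ : l} {n : ℕ} (v : Fin n → l × l) :
    piTau (τ + σ) (τ * σ) σ invτσ (tauOp (τ + σ) (τ * σ) n v) =
      τ • piTau (τ + σ) (τ * σ) σ invτσ v := by
  funext i
  simp only [piTau, tauOp, LinearMap.coe_mk, AddHom.coe_mk, Pi.smul_apply, Pi.sub_apply]
  obtain ⟨x, y⟩ := v i
  simp only [Prod.smul_mk, smul_eq_mul, Prod.mk_sub_mk, Prod.mk_add_mk]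
  exact Prod.ext (by ring) (by ring)

/-- eigenvectors of `tauOp` are fixed by `piTau`. -/
lemma piTau_fixed {c₁ c₂ τ σ invτσ : l} (hinv : invτσ * (τ - σ) = 1) {n : ℕ}
    (v : Fin n → l × l) (hv : tauOp c₁ c₂ n v = τ • v) :
    piTau c₁ c₂ σ invτσ v = v := by
  unfold piTau
  rw [hv, ← sub_smul, smul_smul, hinv, one_smul]

end Aux2

section Aux3
variable {l : Type*} [CommRing l]

lemma piTau_zero (c₁ c₂ σ invτσ : l) {n : ℕ} :
    piTau c₁ c₂ σ invτσ (0 : Fin n → l × l) = 0 := by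
  funext i
  simp [piTau, tauOp, Prod.ext_iff]

lemma piTau_sum (c₁ c₂ σ invτσ : l) {n : ℕ} {ι : Type*} (s : Finset ι)
    (f : ι → Fin n → l × l) :
    piTau c₁ c₂ σ invτσ (∑ i ∈ s, f i) = ∑ i ∈ s, piTau c₁ c₂ σ invτσ (f i) := by
  classical
  induction s using Finset.induction with
  | empty => simp [piTau_zero]
  | insert _ _ h ih => rw [Finset.sum_insert h, Finset.sum_insert h, piTau_add, ih]

end Aux3

/-- In a folded representation with `l` an integral domain contained in
`ℝ` and `τ > 0`: for every `γ ∈ Φ` written as `γ = Σ_{α∈Δ} m_α·α` with integers `m_α` that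
are all `≥ 0` (respectively all `≤ 0`), one has
`π_τ(γ) = Σ_{α∈Δ_rat} (m_α + τ·m_{𝒯α})·π_τ(α) + Σ_{α∈Δ^𝒯} m_α·α`, and all the
coefficients `m_α + τ·m_{𝒯α}` (`α ∈ Δ_rat`) and `m_α` (`α ∈ Δ^𝒯`) are `≥ 0`
(respectively `≤ 0`) as real numbers.  Consequently every element of `π_τ(Φ)` is an
`l`-linear combination of `Δ_τ := π_τ(Δ_rat ⊔ Δ^𝒯)` whose coefficients are all
nonnegative or all nonpositive real numbers, i.e. `Δ_τ` is a set of simple roots for the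
twisted folding `Φ_τ`. -/
theorem simple_roots_of_twisted_folding
    (k : Type*) [CommRing k] [IsDomain k] (ιk : k →+* ℝ) (hιk : Function.Injective ιk)
    (l : Type*) [CommRing l] [Algebra k l] [IsDomain l]
    -- `l` is an integral domain contained in `ℝ`, with `τ > 0`
    (ιl : l →+* ℝ) (hιl : Function.Injective ιl)
    (c₁ c₂ : k) (τ σ : l) (b : Module.Basis (Fin 2) k l) (hb0 : b 0 = 1) (hb1 : b 1 = τ)
    (hτ : τ ^ 2 = algebraMap k l c₁ * τ - algebraMap k l c₂)
    (hσ : σ = algebraMap k l c₁ - τ)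
    (hc₂ : IsUnit c₂) (hD : IsUnit (c₁ ^ 2 - 4 * c₂))
    (hc₂' : c₂ = -1) (hτpos : 0 < ιl τ)
    (invτσ : l) (hinv : invτσ * (τ - σ) = 1)
    (n : ℕ) [DecidableEq (Fin n → l)]
    -- the simple roots `Δ` of `Φ` with the partition `Δ = Δ^𝒯 ⊔ Δ_rat ⊔ 𝒯(Δ_rat)`
    (Δ ΔT Δrat : Finset (Fin n → l)) (Φ : Set (Fin n → l))
    (hpart : Δ = ΔT ∪ Δrat ∪ Δrat.image (fun α => τ • α))
    (hd1 : Disjoint ΔT Δrat)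
    (hd2 : Disjoint ΔT (Δrat.image (fun α => τ • α)))
    (hd3 : Disjoint Δrat (Δrat.image (fun α => τ • α)))
    (hΔ0 : ∀ α ∈ Δ, α ≠ 0)
    (hratprop : ∀ α ∈ Δrat, ∃ c : k, dotU α α = algebraMap k l c)
    (hTT : ∀ β ∈ ΔT, τ • β = β) :
    -- the explicit formula for `π_τ(γ)` together with the sign of its coefficients
    (∀ (m : (Fin n → l) → ℤ) (γ : Fin n → l), γ = ∑ α ∈ Δ, m α • α →
      (piTau (algebraMap k l c₁) (algebraMap k l c₂) σ invτσ (emb b γ) =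
          (∑ α ∈ Δrat, (((m α : ℤ) : l) + τ * ((m (τ • α) : ℤ) : l)) •
              piTau (algebraMap k l c₁) (algebraMap k l c₂) σ invτσ (emb b α)) +
            ∑ α ∈ ΔT, ((m α : ℤ) : l) • emb b α) ∧
      ((∀ α ∈ Δ, 0 ≤ m α) →
        (∀ α ∈ Δrat, 0 ≤ ((m α : ℝ) + ιl τ * (m (τ • α) : ℝ))) ∧
          (∀ α ∈ ΔT, (0:ℝ) ≤ (m α : ℝ))) ∧
      ((∀ α ∈ Δ, m α ≤ 0) →
        (∀ α ∈ Δrat, ((m α : ℝ) + ιl τ * (m (τ • α) : ℝ)) ≤ 0) ∧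
          (∀ α ∈ ΔT, (m α : ℝ) ≤ (0:ℝ)))) ∧
    -- consequently `Δ_τ = π_τ(Δ_rat ⊔ Δ^𝒯)` is a set of simple roots for `Φ_τ`
    ((∀ γ ∈ Φ, ∃ m : (Fin n → l) → ℤ, γ = ∑ α ∈ Δ, m α • α ∧
        ((∀ α ∈ Δ, 0 ≤ m α) ∨ (∀ α ∈ Δ, m α ≤ 0))) →
      ∀ γ ∈ Φ, ∃ f : (Fin n → l) → l,
        piTau (algebraMap k l c₁) (algebraMap k l c₂) σ invτσ (emb b γ) =
            ∑ δ ∈ Δrat ∪ ΔT, f δ •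
              piTau (algebraMap k l c₁) (algebraMap k l c₂) σ invτσ (emb b δ) ∧
          ((∀ δ ∈ Δrat ∪ ΔT, 0 ≤ ιl (f δ)) ∨ (∀ δ ∈ Δrat ∪ ΔT, ιl (f δ) ≤ 0))) := by
    classical
  have hAc₁ : algebraMap k l c₁ = τ + σ := by rw [hσ]; ring
  have hAc₂ : algebraMap k l c₂ = τ * σ := by rw [hσ]; linear_combination hτ
  have hτ0 : τ ≠ 0 := by
    intro h
    rw [h, map_zero] at hτpos
    exact lt_irrefl 0 hτpos
  have hinj : ∀ a ∈ Δrat, ∀ a' ∈ Δrat, τ • a = τ • a' → a = a' := by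
    intro a _ a' _ h
    funext i
    have h2 : τ * a i = τ * a' i := by simpa [smul_eq_mul] using congrFun h i
    exact mul_left_cancel₀ hτ0 h2
  have hsubrat : Δrat ⊆ Δ := by
    intro x hx; rw [hpart]
    exact Finset.mem_union_left _ (Finset.mem_union_right _ hx)
  have hsubT : ΔT ⊆ Δ := by
    intro x hx; rw [hpart]
    exact Finset.mem_union_left _ (Finset.mem_union_left _ hx)
  have hmemimg : ∀ α ∈ Δrat, τ • α ∈ Δ := by
    intro α hα; rw [hpart]
    exact Finset.mem_union_right _ (Finset.mem_image_of_mem _ hα)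
  -- `piTau` fixes `emb b β` for `β ∈ ΔT`
  have hPT : ∀ β ∈ ΔT, piTau (algebraMap k l c₁) (algebraMap k l c₂) σ invτσ (emb b β)
      = emb b β := by
    intro β hβ
    obtain ⟨i, hi⟩ : ∃ i, β i ≠ 0 := by
      by_contra h
      push_neg at h
      exact hΔ0 β (hsubT hβ) (funext h)
    have h2 : τ * β i = β i := by simpa [smul_eq_mul] using congrFun (hTT β hβ) i
    have h3 : (τ - 1) * β i = 0 := by linear_combination h2
    have hτ1 : τ = 1 := by
      rcases mul_eq_zero.mp h3 with h | h
      · exact sub_eq_zero.mp h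
      · exact absurd h hi
    refine piTau_fixed hinv _ ?_
    rw [← emb_tau b hb0 hb1 hτ, hTT β hβ, hτ1, one_smul]
  -- `piTau ∘ emb ∘ (τ • ·) = τ • piTau ∘ emb`
  have hPτ : ∀ u : Fin n → l, piTau (algebraMap k l c₁) (algebraMap k l c₂) σ invτσ
      (emb b (τ • u)) = τ • piTau (algebraMap k l c₁) (algebraMap k l c₂) σ invτσ
      (emb b u) := by
    intro u
    rw [emb_tau b hb0 hb1 hτ, hAc₁, hAc₂]
    exact piTau_tauOp (emb b u)
  -- the key formula
  have KEY : ∀ (m : (Fin n → l) → ℤ) (γ : Fin n → l), γ = ∑ α ∈ Δ, m α • α →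
      piTau (algebraMap k l c₁) (algebraMap k l c₂) σ invτσ (emb b γ) =
        (∑ α ∈ Δrat, (((m α : ℤ) : l) + τ * ((m (τ • α) : ℤ) : l)) •
            piTau (algebraMap k l c₁) (algebraMap k l c₂) σ invτσ (emb b α)) +
          ∑ α ∈ ΔT, ((m α : ℤ) : l) • emb b α := by
    intro m γ hγ
    have h1 : emb b γ = ∑ α ∈ Δ, (((m α : ℤ) : l)) • emb b α := by
      rw [hγ, show emb b (∑ α ∈ Δ, m α • α) = embHom b n (∑ α ∈ Δ, m α • α) from rfl,
        map_sum]
      refine Finset.sum_congr rfl fun α _ => ?_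
      rw [map_zsmul]
      exact (Int.cast_smul_eq_zsmul l (m α) (emb b α)).symm
    have h2 : piTau (algebraMap k l c₁) (algebraMap k l c₂) σ invτσ (emb b γ) =
        ∑ α ∈ Δ, (((m α : ℤ) : l)) •
          piTau (algebraMap k l c₁) (algebraMap k l c₂) σ invτσ (emb b α) := by
      rw [h1, piTau_sum]
      exact Finset.sum_congr rfl fun α _ => piTau_smul _ _ _ _ _ _
    have hdisj1 : Disjoint (ΔT ∪ Δrat) (Δrat.image (fun α => τ • α)) :=
      Finset.disjoint_union_left.mpr ⟨hd2, hd3⟩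
    rw [h2, hpart, Finset.sum_union hdisj1, Finset.sum_union hd1,
      Finset.sum_image hinj]
    have h3 : ∀ α ∈ Δrat, (((m (τ • α) : ℤ) : l)) •
        piTau (algebraMap k l c₁) (algebraMap k l c₂) σ invτσ (emb b (τ • α)) =
        (((m (τ • α) : ℤ) : l)) • (τ • piTau (algebraMap k l c₁) (algebraMap k l c₂) σ
          invτσ (emb b α)) := by
      intro α _
      rw [hPτ α]
    rw [Finset.sum_congr rfl h3]
    have h4 : ∀ α ∈ Δrat, (((m α : ℤ) : l) + τ * ((m (τ • α) : ℤ) : l)) •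
        piTau (algebraMap k l c₁) (algebraMap k l c₂) σ invτσ (emb b α) =
        (((m α : ℤ) : l)) • piTau (algebraMap k l c₁) (algebraMap k l c₂) σ invτσ
          (emb b α) + (((m (τ • α) : ℤ) : l)) •
          (τ • piTau (algebraMap k l c₁) (algebraMap k l c₂) σ invτσ (emb b α)) := by
      intro α _
      rw [add_smul, mul_comm, mul_smul]
    rw [Finset.sum_congr rfl h4, Finset.sum_add_distrib,
      Finset.sum_congr rfl (fun β hβ => by rw [hPT β hβ])]
    abel
  -- sign statements
  have POS : ∀ (m : (Fin n → l) → ℤ), (∀ α ∈ Δ, 0 ≤ m α) →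
      (∀ α ∈ Δrat, 0 ≤ ((m α : ℝ) + ιl τ * (m (τ • α) : ℝ))) ∧
        (∀ α ∈ ΔT, (0:ℝ) ≤ (m α : ℝ)) := by
    intro m hm
    constructor
    · intro α hα
      have h1 : (0:ℝ) ≤ (m α : ℝ) := by exact_mod_cast hm α (hsubrat hα)
      have h2 : (0:ℝ) ≤ (m (τ • α) : ℝ) := by exact_mod_cast hm _ (hmemimg α hα)
      have h3 : (0:ℝ) ≤ ιl τ * (m (τ • α) : ℝ) := mul_nonneg hτpos.le h2
      linarith
    · intro α hα
      exact_mod_cast hm α (hsubT hα)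
  have NEG : ∀ (m : (Fin n → l) → ℤ), (∀ α ∈ Δ, m α ≤ 0) →
      (∀ α ∈ Δrat, ((m α : ℝ) + ιl τ * (m (τ • α) : ℝ)) ≤ 0) ∧
        (∀ α ∈ ΔT, (m α : ℝ) ≤ (0:ℝ)) := by
    intro m hm
    constructor
    · intro α hα
      have h1 : (m α : ℝ) ≤ 0 := by exact_mod_cast hm α (hsubrat hα)
      have h2 : (m (τ • α) : ℝ) ≤ 0 := by exact_mod_cast hm _ (hmemimg α hα)
      have h3 : ιl τ * (m (τ • α) : ℝ) ≤ 0 := mul_nonpos_of_nonneg_of_nonpos hτpos.le h2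
      linarith
    · intro α hα
      exact_mod_cast hm α (hsubT hα)
  refine ⟨fun m γ hγ => ⟨KEY m γ hγ, POS m, NEG m⟩, ?_⟩
  -- consequence
  intro hΦ γ hγΦ
  obtain ⟨m, hγ, hsign⟩ := hΦ γ hγΦ
  refine ⟨fun δ => if δ ∈ Δrat then ((m δ : ℤ) : l) + τ * ((m (τ • δ) : ℤ) : l)
    else ((m δ : ℤ) : l), ?_, ?_⟩
  · rw [KEY m γ hγ, Finset.sum_union hd1.symm]
    congr 1
    · refine Finset.sum_congr rfl fun δ hδ => ?_
      simp only [if_pos hδ]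
    · refine Finset.sum_congr rfl fun δ hδ => ?_
      simp only [if_neg (Finset.disjoint_left.mp hd1 hδ)]
      rw [hPT δ hδ]
  · have cast1 : ∀ δ, δ ∈ Δrat →
        ιl (((m δ : ℤ) : l) + τ * ((m (τ • δ) : ℤ) : l)) =
          (m δ : ℝ) + ιl τ * (m (τ • δ) : ℝ) := by
      intro δ _
      rw [map_add, map_mul, map_intCast, map_intCast]
    rcases hsign with hs | hs
    · left
      intro δ hδ
      rcases Finset.mem_union.mp hδ with h | h
      · simp only [if_pos h]
        rw [cast1 δ h]
        exact (POS m hs).1 δ h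
      · simp only [if_neg (Finset.disjoint_left.mp hd1 h)]
        rw [map_intCast]
        exact (POS m hs).2 δ h
    · right
      intro δ hδ
      rcases Finset.mem_union.mp hδ with h | h
      · simp only [if_pos h]
        rw [cast1 δ h]
        exact (NEG m hs).1 δ h
      · simp only [if_neg (Finset.disjoint_left.mp hd1 h)]
        rw [map_intCast]
        exact (NEG m hs).2 δ h
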